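/- Let K be a field, let f, g ∈ K[x_1,…,x_n], and let G be a chordal structure of the set {f, g}. Suppose G has a perfect elimination ordering in which the variable x_k is greater than or equal to every variable occurring in f or in g. Then G is a chordal structure of the set {res(f, g, x_k)}. -/

import Mathlib

open MvPolynomial

/-- The associated graph of a set of multivariate polynomials: vertices are variables,
with an edge between two distinct variables iff some polynomial contains both. -/
def assocGraph {σ R : Type*} [CommSemiring R] [DecidableEq σ]
    (F : Set (MvPolynomial σ R)) : SimpleGraph σ where
  Adj i j := i ≠ j ∧ ∃ f ∈ F, i ∈ f.vars ∧ j ∈ f.vars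
  symm := by
    constructor
    intro i j h
    exact ⟨h.1.symm, by obtain ⟨f, hf, hi, hj⟩ := h.2; exact ⟨f, hf, hj, hi⟩⟩
  loopless := by constructor; intro i h; exact h.1 rfl

/-- `lt` (a strict linear ordering of the vertices) is a perfect elimination ordering of `G`:
for every vertex `v`, the vertex `v` together with its earlier neighbours forms a clique. -/
def IsPEO {V : Type*} (G : SimpleGraph V) (lt : V → V → Prop) : Prop :=
  ∀ v : V, G.IsClique (insert v {u | lt u v ∧ G.Adj u v})

/-- A graph is chordal if it admits a perfect elimination ordering. -/
def ChordalGraph {V : Type*} (G : SimpleGraph V) : Prop :=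
  ∃ lt : V → V → Prop, IsStrictTotalOrder V lt ∧ IsPEO G lt

/-- `G` is a chordal structure of `F`: `G` is chordal and the associated graph of `F`
is a subgraph of `G`. -/
def ChordalStructure {σ R : Type*} [CommSemiring R] [DecidableEq σ]
    (G : SimpleGraph σ) (F : Set (MvPolynomial σ R)) : Prop :=
  ChordalGraph G ∧ assocGraph F ≤ G

/-- `f` regarded as a univariate polynomial in the variable `k`,
with coefficients in the polynomial ring in the remaining variables. -/
noncomputable def toUnivar {σ R : Type*} [CommSemiring R] [DecidableEq σ] (k : σ)
    (f : MvPolynomial σ R) : Polynomial (MvPolynomial {j : σ // j ≠ k} R) :=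
  optionEquivLeft R {j : σ // j ≠ k} (rename (Equiv.optionSubtypeNe k).symm f)

/-- The `i`-th coefficient of `f` regarded as a univariate polynomial in `k`,
viewed again as a polynomial in all the variables. -/
noncomputable def coeffWrt {σ R : Type*} [CommSemiring R] [DecidableEq σ] (k : σ)
    (f : MvPolynomial σ R) (i : ℕ) : MvPolynomial σ R :=
  rename Subtype.val ((toUnivar k f).coeff i)

/-- The leading coefficient of `f` regarded as a univariate polynomial in `k`. -/
noncomputable def lcWrt {σ R : Type*} [CommSemiring R] [DecidableEq σ] (k : σ)
    (f : MvPolynomial σ R) : MvPolynomial σ R :=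
  rename Subtype.val (toUnivar k f).leadingCoeff

/-- The Sylvester matrix of two univariate polynomials `p` and `q`:
the first `q.natDegree` rows are the shifted coefficient vectors of `p`,
the remaining `p.natDegree` rows are the shifted coefficient vectors of `q`. -/
noncomputable def sylvesterMatrix {R : Type*} [CommRing R] (p q : Polynomial R) :
    Matrix (Fin (q.natDegree + p.natDegree)) (Fin (q.natDegree + p.natDegree)) R :=
  Matrix.of fun i j =>
    if (i : ℕ) < q.natDegree then
      (if (i : ℕ) ≤ (j : ℕ) ∧ (j : ℕ) ≤ (i : ℕ) + p.natDegree
        then p.coeff (p.natDegree - ((j : ℕ) - (i : ℕ))) else 0)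
    else
      (if (i : ℕ) - q.natDegree ≤ (j : ℕ) ∧ (j : ℕ) ≤ ((i : ℕ) - q.natDegree) + q.natDegree
        then q.coeff (q.natDegree - ((j : ℕ) - ((i : ℕ) - q.natDegree))) else 0)

/-- The resultant of two univariate polynomials: the determinant of their Sylvester matrix. -/
noncomputable def resultant {R : Type*} [CommRing R] (p q : Polynomial R) : R :=
  (sylvesterMatrix p q).det

/-- The resultant of `f` and `g` with respect to the variable `k`: the resultant of `f` and `g`
regarded as univariate polynomials in `k`, viewed again as a polynomial in all the variables. -/
noncomputable def resWrt {σ R : Type*} [CommRing R] [DecidableEq σ] (k : σ)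
    (f g : MvPolynomial σ R) : MvPolynomial σ R :=
  rename Subtype.val (resultant (toUnivar k f) (toUnivar k g))

namespace ChordalAux

set_option linter.unusedSectionVars false

open MvPolynomial

variable {σ R : Type*} [CommRing R] [Nontrivial R] [DecidableEq σ]

/-- Polynomials all of whose coefficients lie in a subalgebra `A`. -/
def coeffsIn {S : Type*} [CommSemiring S] [Algebra R S] (A : Subalgebra R S) :
    Subalgebra R (Polynomial S) where
  carrier := {p | ∀ i, p.coeff i ∈ A}
  add_mem' {p q} hp hq i := by
    simpa [Polynomial.coeff_add] using A.add_mem (hp i) (hq i)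
  mul_mem' {p q} hp hq i := by
    rw [Polynomial.coeff_mul]
    exact Subalgebra.sum_mem A fun x _ => A.mul_mem (hp _) (hq _)
  algebraMap_mem' r i := by
    rw [Polynomial.algebraMap_apply, Polynomial.coeff_C]
    split
    · exact Subalgebra.algebraMap_mem A r
    · exact A.zero_mem

lemma mem_coeffsIn {S : Type*} [CommSemiring S] [Algebra R S] {A : Subalgebra R S}
    {p : Polynomial S} : p ∈ coeffsIn A ↔ ∀ i, p.coeff i ∈ A := Iff.rfl

/-- Polynomials of `natDegree` zero form a subalgebra. -/
def degZero (S : Type*) [CommSemiring S] [Algebra R S] : Subalgebra R (Polynomial S) where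
  carrier := {p | p.natDegree = 0}
  zero_mem' := by simp [Set.mem_setOf_eq]
  one_mem' := by simp [Set.mem_setOf_eq]
  add_mem' {p q} hp hq := by
    simp only [Set.mem_setOf_eq] at hp hq ⊢
    have h := Polynomial.natDegree_add_le p q
    rw [hp, hq] at h
    simpa using h
  mul_mem' {p q} hp hq := by
    simp only [Set.mem_setOf_eq] at hp hq ⊢
    have h := Polynomial.natDegree_mul_le (p := p) (q := q)
    rw [hp, hq] at h
    simpa using h
  algebraMap_mem' r := by
    simp only [Set.mem_setOf_eq, Polynomial.algebraMap_apply]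
    exact Polynomial.natDegree_C _

lemma toUnivar_X_self (k : σ) : toUnivar k (X k : MvPolynomial σ R) = Polynomial.X := by
  rw [toUnivar, rename_X, Equiv.optionSubtypeNe_symm_self, optionEquivLeft_X_none]

lemma toUnivar_X_ne {k j : σ} (h : j ≠ k) :
    toUnivar k (X j : MvPolynomial σ R) = Polynomial.C (X ⟨j, h⟩) := by
  rw [toUnivar, rename_X, Equiv.optionSubtypeNe_symm_of_ne h, optionEquivLeft_X_some]

lemma toUnivar_mem_adjoin (k : σ) (f : MvPolynomial σ R) :
    toUnivar k f ∈ Algebra.adjoin R ((fun j => toUnivar k (X j : MvPolynomial σ R)) ''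
      (↑f.vars : Set σ)) := by
  have hf : f ∈ supported R (↑f.vars : Set σ) := mem_supported_vars f
  rw [supported_eq_adjoin_X] at hf
  let Φ : MvPolynomial σ R →ₐ[R] Polynomial (MvPolynomial {j : σ // j ≠ k} R) :=
    (optionEquivLeft R {j : σ // j ≠ k}).toAlgHom.comp
      (rename (Equiv.optionSubtypeNe k).symm : MvPolynomial σ R →ₐ[R] _)
  have hΦ : ∀ p : MvPolynomial σ R, Φ p = toUnivar k p := fun p => rfl
  have h2 : Φ f ∈ (Algebra.adjoin R (X '' (↑f.vars : Set σ))).map Φ :=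
    Subalgebra.mem_map.mpr ⟨f, hf, rfl⟩
  rw [AlgHom.map_adjoin] at h2
  rw [← hΦ]
  convert h2 using 2
  rw [← Set.image_comp]
  ext p
  constructor
  · rintro ⟨j, hj, rfl⟩
    exact ⟨j, hj, (hΦ _).symm⟩
  · rintro ⟨j, hj, rfl⟩
    exact ⟨j, hj, hΦ _⟩

lemma toUnivar_coeff_mem (k : σ) (f : MvPolynomial σ R) (i : ℕ) :
    (toUnivar k f).coeff i ∈
      supported R (Subtype.val ⁻¹' (↑f.vars : Set σ) : Set {j : σ // j ≠ k}) := by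
  have h := toUnivar_mem_adjoin k f
  have hsub : toUnivar k f ∈ coeffsIn (supported R
      (Subtype.val ⁻¹' (↑f.vars : Set σ) : Set {j : σ // j ≠ k})) := by
    refine Algebra.adjoin_le ?_ h
    rintro _ ⟨j, hj, rfl⟩
    show toUnivar k (X j) ∈ _
    by_cases hjk : j = k
    · subst hjk
      rw [toUnivar_X_self]
      intro m
      rw [Polynomial.coeff_X]
      split
      · exact Subalgebra.one_mem _
      · exact Subalgebra.zero_mem _
    · rw [toUnivar_X_ne hjk]
      intro m
      rw [Polynomial.coeff_C]
      split
      · rw [mem_supported]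
        intro x hx
        rw [vars_X, Finset.coe_singleton, Set.mem_singleton_iff] at hx
        subst hx
        exact hj
      · exact Subalgebra.zero_mem _
  exact hsub i

lemma natDegree_toUnivar_eq_zero {k : σ} {f : MvPolynomial σ R} (hk : k ∉ f.vars) :
    (toUnivar k f).natDegree = 0 := by
  have h := toUnivar_mem_adjoin k f
  have : toUnivar k f ∈ degZero (R := R) (MvPolynomial {j : σ // j ≠ k} R) := by
    refine Algebra.adjoin_le ?_ h
    rintro _ ⟨j, hj, rfl⟩
    have hjk : j ≠ k := fun h' => hk (h' ▸ hj)
    show toUnivar k (X j) ∈ _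
    rw [toUnivar_X_ne hjk]
    show (Polynomial.C (X ⟨j, hjk⟩) : Polynomial (MvPolynomial {j : σ // j ≠ k} R)).natDegree = 0
    exact Polynomial.natDegree_C _
  exact this

lemma resultant_mem {S : Type*} [CommRing S] (A : Subring S) (p q : Polynomial S)
    (hp : ∀ i, p.coeff i ∈ A) (hq : ∀ i, q.coeff i ∈ A) : resultant p q ∈ A := by
  rw [resultant, Matrix.det_apply]
  refine Subring.sum_mem A fun c _ => ?_
  rw [Units.smul_def, zsmul_eq_mul]
  refine A.mul_mem (intCast_mem A _) (Subring.prod_mem A fun i _ => ?_)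
  rw [sylvesterMatrix, Matrix.of_apply]
  split
  · split
    · exact hp _
    · exact A.zero_mem
  · split
    · exact hq _
    · exact A.zero_mem

lemma resultant_left_degZero {S : Type*} [CommRing S] (p q : Polynomial S)
    (hp : p.natDegree = 0) :
    resultant p q = (p.coeff 0) ^ (q.natDegree + p.natDegree) := by
  rw [resultant]
  have hM : sylvesterMatrix p q = Matrix.diagonal (fun _ => p.coeff 0) := by
    ext i j
    rw [sylvesterMatrix, Matrix.of_apply, Matrix.diagonal]
    have hi : (i : ℕ) < q.natDegree := by have := i.isLt; omega
    rw [if_pos hi]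
    by_cases hij : i = j
    · subst hij
      rw [if_pos ⟨le_refl _, by omega⟩]
      simp [hp]
    · rw [if_neg, Matrix.of_apply, if_neg hij]
      intro ⟨h1, h2⟩
      exact hij (Fin.ext (by omega))
  rw [hM, Matrix.det_diagonal, Finset.prod_const, Finset.card_univ, Fintype.card_fin]

lemma resultant_right_degZero {S : Type*} [CommRing S] (p q : Polynomial S)
    (hq : q.natDegree = 0) :
    resultant p q = (q.coeff 0) ^ (q.natDegree + p.natDegree) := by
  rw [resultant]
  have hM : sylvesterMatrix p q = Matrix.diagonal (fun _ => q.coeff 0) := by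
    ext i j
    rw [sylvesterMatrix, Matrix.of_apply, Matrix.diagonal]
    have hi : ¬ ((i : ℕ) < q.natDegree) := by omega
    rw [if_neg hi]
    by_cases hij : i = j
    · subst hij
      rw [if_pos ⟨by omega, by omega⟩]
      simp [hq]
    · rw [if_neg, Matrix.of_apply, if_neg hij]
      intro ⟨h1, h2⟩
      exact hij (Fin.ext (by omega))
  rw [hM, Matrix.det_diagonal, Finset.prod_const, Finset.card_univ, Fintype.card_fin]

lemma vars_resWrt (k : σ) (f g : MvPolynomial σ R) :
    ∀ x ∈ (resWrt k f g).vars, x ≠ k ∧ (x ∈ f.vars ∨ x ∈ g.vars) := by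
  intro x hx
  have hmem : resultant (toUnivar k f) (toUnivar k g) ∈
      supported R (Subtype.val ⁻¹' ((↑f.vars : Set σ) ∪ ↑g.vars) : Set {j : σ // j ≠ k}) := by
    refine resultant_mem ((supported R _).toSubring) _ _ (fun i => ?_) (fun i => ?_)
    · exact supported_mono (Set.preimage_mono Set.subset_union_left) (toUnivar_coeff_mem k f i)
    · exact supported_mono (Set.preimage_mono Set.subset_union_right) (toUnivar_coeff_mem k g i)
  rw [mem_supported] at hmem
  rw [resWrt] at hx
  have := vars_rename Subtype.val (resultant (toUnivar k f) (toUnivar k g)) hx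
  rw [Finset.mem_image] at this
  obtain ⟨j, hj, rfl⟩ := this
  refine ⟨j.2, ?_⟩
  have := hmem (Finset.mem_coe.mpr hj)
  simpa [Finset.mem_union] using this

lemma vars_resWrt_of_not_mem_left {k : σ} {f : MvPolynomial σ R} (g : MvPolynomial σ R)
    (hk : k ∉ f.vars) : ∀ x ∈ (resWrt k f g).vars, x ∈ f.vars := by
  intro x hx
  have hdeg := natDegree_toUnivar_eq_zero (R := R) hk
  rw [resWrt, resultant_left_degZero _ _ hdeg] at hx
  have hc : ((toUnivar k f).coeff 0) ^ ((toUnivar k g).natDegree + (toUnivar k f).natDegree) ∈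
      supported R (Subtype.val ⁻¹' (↑f.vars : Set σ) : Set {j : σ // j ≠ k}) :=
    pow_mem (toUnivar_coeff_mem k f 0) _
  rw [mem_supported] at hc
  have := vars_rename Subtype.val _ hx
  rw [Finset.mem_image] at this
  obtain ⟨j, hj, rfl⟩ := this
  exact hc (Finset.mem_coe.mpr hj)

lemma vars_resWrt_of_not_mem_right {k : σ} {g : MvPolynomial σ R} (f : MvPolynomial σ R)
    (hk : k ∉ g.vars) : ∀ x ∈ (resWrt k f g).vars, x ∈ g.vars := by
  intro x hx
  have hdeg := natDegree_toUnivar_eq_zero (R := R) hk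
  rw [resWrt, resultant_right_degZero _ _ hdeg] at hx
  have hc : ((toUnivar k g).coeff 0) ^ ((toUnivar k g).natDegree + (toUnivar k f).natDegree) ∈
      supported R (Subtype.val ⁻¹' (↑g.vars : Set σ) : Set {j : σ // j ≠ k}) :=
    pow_mem (toUnivar_coeff_mem k g 0) _
  rw [mem_supported] at hc
  have := vars_rename Subtype.val _ hx
  rw [Finset.mem_image] at this
  obtain ⟨j, hj, rfl⟩ := this
  exact hc (Finset.mem_coe.mpr hj)

end ChordalAux

/-- If `G` is a chordal structure of `{f, g}` having a perfect elimination
ordering in which `x_k` is `≥` every variable occurring in `f` or in `g`, then `G` is a chordal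
structure of `{res(f, g, x_k)}`. -/
theorem chordalStructure_resultant {K : Type*} [Field K] {n : ℕ}
    (f g : MvPolynomial (Fin n) K) (k : Fin n)
    (G : SimpleGraph (Fin n)) (hG : ChordalStructure G {f, g})
    (hord : ∃ lt : Fin n → Fin n → Prop, IsStrictTotalOrder (Fin n) lt ∧ IsPEO G lt ∧
      ∀ y ∈ f.vars ∪ g.vars, y = k ∨ lt y k) :
    ChordalStructure G {resWrt k f g} := by

  obtain ⟨hchord, hle⟩ := hG
  obtain ⟨lt, hsto, hpeo, hmax⟩ := hord
  refine ⟨hchord, ?_⟩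
  intro i j hadj
  obtain ⟨hij, r, hr, hi, hj⟩ := hadj
  rw [Set.mem_singleton_iff] at hr
  subst hr
  have hfmem : f ∈ ({f, g} : Set (MvPolynomial (Fin n) K)) := Set.mem_insert _ _
  have hgmem : g ∈ ({f, g} : Set (MvPolynomial (Fin n) K)) := Set.mem_insert_of_mem _ rfl
  by_cases hkf : k ∈ f.vars
  · by_cases hkg : k ∈ g.vars
    · obtain ⟨hik, hifg⟩ := ChordalAux.vars_resWrt k f g i hi
      obtain ⟨hjk, hjfg⟩ := ChordalAux.vars_resWrt k f g j hj
      have hadjik : G.Adj i k := by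
        refine hle ⟨hik, ?_⟩
        rcases hifg with h | h
        · exact ⟨f, hfmem, h, hkf⟩
        · exact ⟨g, hgmem, h, hkg⟩
      have hadjjk : G.Adj j k := by
        refine hle ⟨hjk, ?_⟩
        rcases hjfg with h | h
        · exact ⟨f, hfmem, h, hkf⟩
        · exact ⟨g, hgmem, h, hkg⟩
      have hlti : lt i k := by
        rcases hmax i (Finset.mem_union.mpr hifg) with h | h
        · exact absurd h hik
        · exact h
      have hltj : lt j k := by
        rcases hmax j (Finset.mem_union.mpr hjfg) with h | h
        · exact absurd h hjk
        · exact h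
      exact hpeo k (Set.mem_insert_of_mem _ ⟨hlti, hadjik⟩)
        (Set.mem_insert_of_mem _ ⟨hltj, hadjjk⟩) hij
    · have hi' := ChordalAux.vars_resWrt_of_not_mem_right f hkg i hi
      have hj' := ChordalAux.vars_resWrt_of_not_mem_right f hkg j hj
      exact hle ⟨hij, g, hgmem, hi', hj'⟩
  · have hi' := ChordalAux.vars_resWrt_of_not_mem_left g hkf i hi
    have hj' := ChordalAux.vars_resWrt_of_not_mem_left g hkf j hj
    exact hle ⟨hij, f, hfmem, hi', hj'⟩
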